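/- The point E₅ = (0, (c−1)/(ε−1), (ε−c)/(ε−1), 0) lies in the simplex (i.e., has nonnegative coordinates summing to 1) if and only if ε ≤ c < 1, and at E₅ the strategies D and CE earn equal payoff: Π_D = Π_CE. -/

import Mathlib

/-- The point `E₅ = (0, (c−1)/(ε−1), (ε−c)/(ε−1), 0)` lies in the simplex
(nonnegative coordinates summing to 1) if and only if `ε ≤ c < 1`, and at `E₅`
the strategies D and CE earn equal payoff: `Π_D = Π_CE`, where `Π_D = b·x` and
`Π_CE = (x+z)(1−c) + (y+w)(ε−c)` evaluated at `(x,y,z,w) = E₅`. -/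
theorem E5_simplex_and_indifference (b c ε : ℝ) (hb1 : 1 < b) (hb2 : b ≤ 2)
    (hc0 : 0 < c) (hc1 : c < 1) (he0 : 0 < ε) (he1 : ε < 1) :
    ((0 ≤ (c - 1) / (ε - 1) ∧ 0 ≤ (ε - c) / (ε - 1) ∧
        (0 : ℝ) + (c - 1) / (ε - 1) + (ε - c) / (ε - 1) + 0 = 1)
      ↔ (ε ≤ c ∧ c < 1)) ∧
    b * 0 = ((0 : ℝ) + (ε - c) / (ε - 1)) * (1 - c)
        + ((c - 1) / (ε - 1) + 0) * (ε - c) := by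
  have hne : ε - 1 < 0 := by linarith
  constructor
  · constructor
    · rintro ⟨h1, h2, h3⟩
      refine ⟨?_, hc1⟩
      nlinarith [mul_nonneg h2 (neg_nonneg.2 hne.le), div_mul_cancel₀ (ε - c) (ne_of_lt hne)]
    · rintro ⟨hec, _⟩
      refine ⟨?_, ?_, ?_⟩
      · exact div_nonneg_of_nonpos (by linarith) hne.le
      · exact div_nonneg_of_nonpos (by linarith) hne.le
      · field_simp
        linear_combination div_self (ne_of_lt hne)
  · field_simp
    ring
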